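/- Let (n,δ) be a finite-dimensional 2-step nilpotent Lie bialgebra over a field k of characteristic zero, with center z, linear complement W, basis {z_i} of z and basis {λ_j} of W*. Define antisymmetric maps T_i : W → W* by [v,w] = Σ_i T_i(v)(w) z_i for v,w ∈ W, and antisymmetric maps S_j : W* → W from the transpose [·,·]* of the Λ²W-component δ₁ of δ|_W via [λ,μ]* = Σ_j S_j(μ)(λ) λ_j. If moreover δ(z) ⊆ Λ²z, then T_i S_j T_k + T_k S_j T_i = 0 as maps W → W* for all indices i, j, k. -/

import Mathlib

open TensorProduct

/-- The adjoint action of a Lie algebra `g` on `g ⊗ g`, determined by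
`x · (a ⊗ b) = ⁅x,a⁆ ⊗ b + a ⊗ ⁅x,b⁆`. -/
noncomputable def tAct (k g : Type*) [CommRing k] [LieRing g] [LieAlgebra k g] (x : g) :
    g ⊗[k] g →ₗ[k] g ⊗[k] g :=
  TensorProduct.map (LieAlgebra.ad k g x) LinearMap.id
    + TensorProduct.map LinearMap.id (LieAlgebra.ad k g x)

/-- The cyclic rotation `(a⊗b)⊗c ↦ (c⊗a)⊗b` on `(g⊗g)⊗g`. -/
noncomputable def tCyc (k g : Type*) [CommRing k] [AddCommGroup g] [Module k g] :
    (g ⊗[k] g) ⊗[k] g →ₗ[k] (g ⊗[k] g) ⊗[k] g :=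
  ((TensorProduct.assoc k g g g).symm.toLinearMap).comp
    (TensorProduct.comm k (g ⊗[k] g) g).toLinearMap

/-- For submodules `P Q ⊆ g`, the image of `P ⊗ Q` in `g ⊗ g`. -/
noncomputable def tsub (k g : Type*) [CommRing k] [AddCommGroup g] [Module k g]
    (P Q : Submodule k g) : Submodule k (g ⊗[k] g) :=
  LinearMap.range (TensorProduct.map P.subtype Q.subtype)

/-- Evaluation of `f ⊗ h` on `M ⊗ M`: `a ⊗ b ↦ f(a) * h(b)`. -/
noncomputable def pairT (k M : Type*) [CommRing k] [AddCommGroup M] [Module k M]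
    (f h : Module.Dual k M) : M ⊗[k] M →ₗ[k] k :=
  (TensorProduct.lid k k).toLinearMap.comp (TensorProduct.map f h)

/-- for a finite-dimensional 2-step nilpotent Lie bialgebra `(n,δ)` with
center `z`, complement `W`, basis `{z_i}` of `z`, basis `{λ_j}` of `W*`, with
`T_i : W → W*` defined by `[v,w] = Σ_i T_i(v)(w) z_i` and `S_j : W* → W` defined from the
transpose of the `Λ²W`-component `δ₁` of `δ|_W` via `[λ,μ]* = Σ_j S_j(μ)(λ) λ_j`
(`[λ,μ]*(v) = λ(v₁)μ(v₂)` for `δ₁(v) = v₁∧v₂`): if `δ(z) ⊆ Λ²z` then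
`T_i S_j T_k + T_k S_j T_i = 0` for all `i,j,k`. -/
theorem stmt4 (k n : Type*) [Field k] [CharZero k] [LieRing n] [LieAlgebra k n]
    [FiniteDimensional k n]
    (h2step : ∀ x y : n, ⁅x, y⁆ ∈ LieAlgebra.center k n)
    (W : Submodule k n)
    (hcompl : IsCompl (LieAlgebra.center k n).toSubmodule W)
    (δ : n →ₗ[k] n ⊗[k] n)
    -- δ is a Lie bialgebra structure:
    (hanti : ∀ x, TensorProduct.comm k n n (δ x) = - δ x)
    (hcoJ : ∀ x, (TensorProduct.map δ LinearMap.id) (δ x)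
        + tCyc k n ((TensorProduct.map δ LinearMap.id) (δ x))
        + tCyc k n (tCyc k n ((TensorProduct.map δ LinearMap.id) (δ x))) = 0)
    (hcoc : ∀ x y, δ ⁅x, y⁆ = tAct k n x (δ y) - tAct k n y (δ x))
    -- bases of z and of W*:
    {I J : Type*} [Fintype I] [Fintype J]
    (bz : Module.Basis I k (LieAlgebra.center k n).toSubmodule)
    (bl : Module.Basis J k (Module.Dual k W))
    -- the antisymmetric maps T_i : W → W* determined by the bracket:
    (T : I → (W →ₗ[k] Module.Dual k W))
    (hTanti : ∀ i (v w : W), T i v w = - T i w v)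
    (hT : ∀ v w : W, (⁅(v : n), (w : n)⁆ : n) = ∑ i, T i v w • ((bz i : n)))
    -- δ₁, the Λ²W-component of δ|_W, as an antisymmetric-tensor-valued map on W:
    (d1 : W →ₗ[k] W ⊗[k] W)
    (hd1anti : ∀ v, TensorProduct.comm k W W (d1 v) = - d1 v)
    (hd1comp : ∀ v : W, δ (v : n) - (TensorProduct.map W.subtype W.subtype) (d1 v) ∈
      tsub k n W (LieAlgebra.center k n).toSubmodule
        ⊔ tsub k n (LieAlgebra.center k n).toSubmodule W
        ⊔ tsub k n (LieAlgebra.center k n).toSubmodule (LieAlgebra.center k n).toSubmodule)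
    -- the antisymmetric maps S_j : W* → W determined by the transpose of δ₁:
    (S : J → (Module.Dual k W →ₗ[k] W))
    (hSanti : ∀ j (f h : Module.Dual k W), f (S j h) = - h (S j f))
    (hS : ∀ (f h : Module.Dual k W) (v : W),
      pairT k W f h (d1 v) = ∑ j, f (S j h) * (bl j) v)
    -- hypothesis δ(z) ⊆ Λ²z:
    (hδz : ∀ z ∈ (LieAlgebra.center k n).toSubmodule,
      δ z ∈ tsub k n (LieAlgebra.center k n).toSubmodule (LieAlgebra.center k n).toSubmodule) :
    -- conclusion:
    ∀ (i : I) (j : J) (l : I),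
      (T i).comp ((S j).comp (T l)) + (T l).comp ((S j).comp (T i)) = 0 := by
  intro i j l
  classical
  -- bracket with central element vanishes
  have hbz : ∀ (x : n) (b : (LieAlgebra.center k n).toSubmodule), ⁅x, (b : n)⁆ = 0 :=
    fun x b => b.2 x
  -- tAct on pure tensors
  have htAct : ∀ (x p q : n),
      tAct k n x (p ⊗ₜ[k] q) = ⁅x, p⁆ ⊗ₜ[k] q + p ⊗ₜ[k] ⁅x, q⁆ := by
    intro x p q
    simp [tAct, LieAlgebra.ad_apply]
  -- pairT on pure tensors
  have hpair : ∀ (M : Type _) (_ : AddCommGroup M) (_ : Module k M)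
      (f h : Module.Dual k M) (p q : M), pairT k M f h (p ⊗ₜ[k] q) = f p * h q := by
    intro M _ _ f h p q
    simp [pairT]
  -- THE MAIN RELATION (R')
  have hR : ∀ (a : I) (h : Module.Dual k W) (v w : W),
      ∑ m, (T a v) (S m h) * bl m w = ∑ m, (T a w) (S m h) * bl m v := by
    intro a h v w
    set φ : n →ₗ[k] k := (bz.coord a) ∘ₗ
      ((LieAlgebra.center k n).toSubmodule.projectionOnto W hcompl) with hφdef
    set H : n →ₗ[k] k := h ∘ₗ
      (W.projectionOnto (LieAlgebra.center k n).toSubmodule hcompl.symm) with hHdef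
    have hHz : ∀ b : (LieAlgebra.center k n).toSubmodule, H (b : n) = 0 := by
      intro b
      simp [hHdef, Submodule.projectionOnto_apply_right]
    have hHbr : ∀ x y : n, H ⁅x, y⁆ = 0 := fun x y => hHz ⟨⁅x, y⁆, h2step x y⟩
    have hHW : ∀ b : W, H (b : n) = h b := by
      intro b
      simp [hHdef, Submodule.projectionOnto_apply_left]
    have hφz : ∀ b : I, φ ((bz b : (LieAlgebra.center k n).toSubmodule) : n)
        = if b = a then 1 else 0 := by
      intro b
      simp [hφdef, Submodule.projectionOnto_apply_left, Module.Basis.coord_apply,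
        Module.Basis.repr_self, Finsupp.single_apply]
    have hφbr : ∀ (u x : W), φ ⁅(u : n), (x : n)⁆ = T a u x := by
      intro u x
      rw [hT u x, map_sum]
      simp only [map_smul, hφz, smul_eq_mul, mul_ite, mul_one, mul_zero]
      simp [Finset.sum_ite_eq']
    -- pairT φ H kills z⊗z
    have hK1 : ∀ x ∈ tsub k n (LieAlgebra.center k n).toSubmodule
        (LieAlgebra.center k n).toSubmodule, pairT k n φ H x = 0 := by
      intro x hx
      rw [tsub, LinearMap.mem_range] at hx
      obtain ⟨y, rfl⟩ := hx
      have h0 : (pairT k n φ H) ∘ₗ TensorProduct.map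
          (LieAlgebra.center k n).toSubmodule.subtype
          (LieAlgebra.center k n).toSubmodule.subtype = 0 := by
        refine TensorProduct.ext' fun p q => ?_
        simp only [LinearMap.comp_apply, map_tmul, Submodule.subtype_apply,
          LinearMap.zero_apply]
        rw [hpair, hHz q, mul_zero]
      have := LinearMap.ext_iff.mp h0 y
      simpa using this
    -- pairT φ H ∘ tAct u kills the correction terms
    have hK2 : ∀ (u : W) (x : n ⊗[k] n),
        x ∈ tsub k n W (LieAlgebra.center k n).toSubmodule
          ⊔ tsub k n (LieAlgebra.center k n).toSubmodule W
          ⊔ tsub k n (LieAlgebra.center k n).toSubmodule (LieAlgebra.center k n).toSubmodule →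
        pairT k n φ H (tAct k n (u : n) x) = 0 := by
      intro u x hx
      have hle : tsub k n W (LieAlgebra.center k n).toSubmodule
          ⊔ tsub k n (LieAlgebra.center k n).toSubmodule W
          ⊔ tsub k n (LieAlgebra.center k n).toSubmodule (LieAlgebra.center k n).toSubmodule ≤
          LinearMap.ker ((pairT k n φ H) ∘ₗ tAct k n (u : n)) := by
        refine sup_le (sup_le ?_ ?_) ?_ <;>
          · rw [tsub, LinearMap.range_le_ker_iff]
            refine TensorProduct.ext' fun p q => ?_
            simp only [LinearMap.comp_apply, map_tmul, Submodule.subtype_apply,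
              LinearMap.zero_apply, htAct, map_add]
            rw [hpair, hpair]
            simp [hbz, hHz, hHbr]
      exact hle hx
    -- pairT φ H ∘ tAct u on the W⊗W part gives the S-T pairing
    have hK3 : ∀ (u x : W),
        pairT k n φ H (tAct k n (u : n) ((TensorProduct.map W.subtype W.subtype) (d1 x)))
          = ∑ m, (T a u) (S m h) * bl m x := by
      intro u x
      have hmap : (pairT k n φ H) ∘ₗ (tAct k n (u : n)) ∘ₗ
          (TensorProduct.map W.subtype W.subtype) = pairT k W (T a u) h := by
        refine TensorProduct.ext' fun p q => ?_
        simp only [LinearMap.comp_apply, map_tmul, Submodule.subtype_apply, htAct, map_add]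
        rw [hpair, hpair, hpair]
        rw [hφbr u p, hHW q, hHbr, mul_zero, add_zero]
      have := LinearMap.ext_iff.mp hmap (d1 x)
      simp only [LinearMap.comp_apply] at this
      rw [this, hS]
    -- assemble
    have key : pairT k n φ H (δ ⁅(v : n), (w : n)⁆) = 0 :=
      hK1 _ (hδz _ (h2step (v : n) (w : n)))
    rw [hcoc, map_sub] at key
    have e1 : ∀ u x : W, pairT k n φ H (tAct k n (u : n) (δ (x : n)))
        = ∑ m, (T a u) (S m h) * bl m x := by
      intro u x
      have hdecomp : δ (x : n) = (TensorProduct.map W.subtype W.subtype) (d1 x)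
          + (δ (x : n) - (TensorProduct.map W.subtype W.subtype) (d1 x)) := by abel
      rw [hdecomp, map_add, map_add, hK3, hK2 u _ (hd1comp x), add_zero]
    rw [e1 v w, e1 w v] at key
    exact sub_eq_zero.mp key
  -- predual basis of bl
  obtain ⟨e, he⟩ : ∃ e : J → W, ∀ m m', bl m' (e m) = if m' = m then 1 else 0 :=
    ⟨fun m => (Module.evalEquiv k W).symm (bl.dualBasis m), fun m m' => by
      rw [Module.apply_evalEquiv_symm_apply]
      exact Module.Basis.dualBasis_apply_self bl m m'⟩
  have hcol : ∀ (c : J → k) (m : J), (∑ m', c m' * bl m' (e m)) = c m := by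
    intro c m
    simp [he, mul_ite, Finset.sum_ite_eq']
  -- antisymmetry in (index, first argument)
  have hGanti : ∀ (a b : I) (x y w : W),
      (∑ m, (T a x) (S m (T b y)) * bl m w) = -∑ m, (T b y) (S m (T a x)) * bl m w := by
    intro a b x y w
    rw [← Finset.sum_neg_distrib]
    refine Finset.sum_congr rfl fun m _ => ?_
    rw [hSanti m (T a x) (T b y), neg_mul]
  -- the symmetrized quantity vanishes
  have hH0 : ∀ x y w : W,
      (∑ m, (T i x) (S m (T l y)) * bl m w) + (∑ m, (T l x) (S m (T i y)) * bl m w) = 0 := by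
    have hsym : ∀ x y w : W,
        (∑ m, (T i x) (S m (T l y)) * bl m w) + (∑ m, (T l x) (S m (T i y)) * bl m w)
        = (∑ m, (T i w) (S m (T l y)) * bl m x) + (∑ m, (T l w) (S m (T i y)) * bl m x) := by
      intro x y w
      rw [hR i (T l y) x w, hR l (T i y) x w]
    have hanti : ∀ x y w : W,
        (∑ m, (T i x) (S m (T l y)) * bl m w) + (∑ m, (T l x) (S m (T i y)) * bl m w)
        = -((∑ m, (T i y) (S m (T l x)) * bl m w) + (∑ m, (T l y) (S m (T i x)) * bl m w)) := by
      intro x y w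
      rw [hGanti i l x y w, hGanti l i x y w]
      ring
    intro x y w
    have hchain :
        (∑ m, (T i x) (S m (T l y)) * bl m w) + (∑ m, (T l x) (S m (T i y)) * bl m w)
        = -((∑ m, (T i x) (S m (T l y)) * bl m w) + (∑ m, (T l x) (S m (T i y)) * bl m w)) := by
      calc (∑ m, (T i x) (S m (T l y)) * bl m w) + (∑ m, (T l x) (S m (T i y)) * bl m w)
          = (∑ m, (T i w) (S m (T l y)) * bl m x) + (∑ m, (T l w) (S m (T i y)) * bl m x) :=
            hsym x y w
        _ = -((∑ m, (T i y) (S m (T l w)) * bl m x) + (∑ m, (T l y) (S m (T i w)) * bl m x)) :=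
            hanti w y x
        _ = -((∑ m, (T i x) (S m (T l w)) * bl m y) + (∑ m, (T l x) (S m (T i w)) * bl m y)) := by
            rw [hsym y w x]
        _ = (∑ m, (T i w) (S m (T l x)) * bl m y) + (∑ m, (T l w) (S m (T i x)) * bl m y) := by
            rw [hanti x w y]; ring
        _ = (∑ m, (T i y) (S m (T l x)) * bl m w) + (∑ m, (T l y) (S m (T i x)) * bl m w) :=
            hsym w x y
        _ = -((∑ m, (T i x) (S m (T l y)) * bl m w) + (∑ m, (T l x) (S m (T i y)) * bl m w)) :=
            hanti y x w
    set A := (∑ m, (T i x) (S m (T l y)) * bl m w) + (∑ m, (T l x) (S m (T i y)) * bl m w)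
      with hA
    have h2 : (2 : k) * A = 0 := by
      rw [two_mul]
      nth_rewrite 1 [hchain]
      exact neg_add_cancel A
    exact (mul_eq_zero.mp h2).resolve_left two_ne_zero
  -- conclude
  ext v u
  simp only [LinearMap.add_apply, LinearMap.comp_apply, LinearMap.zero_apply]
  have h1 : (T i) ((S j) ((T l) v)) u = -((T i) u) ((S j) ((T l) v)) := hTanti i _ u
  have h2 : (T l) ((S j) ((T i) v)) u = -((T l) u) ((S j) ((T i) v)) := hTanti l _ u
  rw [h1, h2]
  have hz := hH0 u v (e j)
  rw [hcol (fun m => (T i u) (S m (T l v))) j, hcol (fun m => (T l u) (S m (T i v))) j] at hz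
  linear_combination -hz
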